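/- arXiv:1807.05152 — 5 statements merged into one kernel-verified Lean document; each statement's English description precedes it below -/
import Mathlib

section
/- Let s ≥ 1 and for each N ∈ ℕ let N(0), …, N(s) be natural numbers with ∑_{i=0}^{s} N(i) = N. Suppose that for every i, N(i)/N → μ_i ∈ [0,1] as N → ∞. Then (1/N)·ln( N! / (N(0)!·N(1)!·⋯·N(s)!) ) → −∑_{i=0}^{s} μ_i ln μ_i as N → ∞ (with the convention 0·ln 0 = 0). -/
open Filter Topology

lemma log_fact_lb (n : ℕ) : (n:ℝ) * Real.log n - n ≤ Real.log n.factorial := by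
  rcases Nat.eq_zero_or_pos n with h | h
  · simp [h]
  have hn : (0:ℝ) < n := by exact_mod_cast h
  have h1 : (n:ℝ)^n / n.factorial ≤ Real.exp n := by
    calc (n:ℝ)^n / n.factorial
        ≤ ∑ i ∈ Finset.range (n+1), (n:ℝ)^i / i.factorial := by
          exact Finset.single_le_sum (f := fun i => (n:ℝ)^i / i.factorial)
            (fun i _ => by positivity) (Finset.self_mem_range_succ n)
      _ ≤ Real.exp n := Real.sum_le_exp_of_nonneg (by positivity) _
  have hf : (0:ℝ) < n.factorial := by exact_mod_cast n.factorial_pos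
  have h2 : (n:ℝ)^n ≤ Real.exp n * n.factorial := by
    rw [div_le_iff₀ hf] at h1
    nlinarith
  have h3 := Real.log_le_log (by positivity) h2
  rw [Real.log_pow, Real.log_mul (Real.exp_ne_zero _) (ne_of_gt hf), Real.log_exp] at h3
  push_cast at h3
  linarith

lemma fact_ub (n : ℕ) (hn : 1 ≤ n) :
    (n.factorial : ℝ) * Real.exp n ≤ Real.exp 1 * (n:ℝ) ^ (n+1) := by
  induction n with
  | zero => omega
  | succ m ih =>
    rcases Nat.eq_zero_or_pos m with hm | hm
    · subst hm; simp
    have hmR : (0:ℝ) < m := by exact_mod_cast hm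
    specialize ih hm
    have key : Real.exp 1 * (m:ℝ) ^ (m+1) ≤ ((m:ℝ)+1) ^ (m+1) := by
      have h2 : (m:ℝ)/((m:ℝ)+1) ≤ Real.exp (-(1/((m:ℝ)+1))) := by
        have h0 := Real.add_one_le_exp (-(1/((m:ℝ)+1)))
        have : (m:ℝ)/((m:ℝ)+1) = -(1/((m:ℝ)+1)) + 1 := by field_simp; ring
        rw [this]; linarith
      have h1 : Real.exp (1/((m:ℝ)+1)) * (m:ℝ) ≤ (m:ℝ)+1 := by
        have h3 : Real.exp (1/((m:ℝ)+1)) * ((m:ℝ)/((m:ℝ)+1)) ≤ 1 := by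
          calc Real.exp (1/((m:ℝ)+1)) * ((m:ℝ)/((m:ℝ)+1))
              ≤ Real.exp (1/((m:ℝ)+1)) * Real.exp (-(1/((m:ℝ)+1))) :=
                mul_le_mul_of_nonneg_left h2 (Real.exp_nonneg _)
            _ = 1 := by rw [← Real.exp_add]; simp
        have hm1 : (0:ℝ) < (m:ℝ)+1 := by linarith
        rw [mul_div_assoc'] at h3
        rw [div_le_one hm1] at h3
        linarith
      have h4 : Real.exp 1 * (m:ℝ)^(m+1) ≤ ((m:ℝ)+1)^(m+1) := by
        have h5 := pow_le_pow_left₀ (by positivity : (0:ℝ) ≤ Real.exp (1/((m:ℝ)+1)) * m) h1 (m+1)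
        rw [mul_pow, ← Real.exp_nat_mul] at h5
        have h6 : ((m:ℝ)+1) * (1/((m:ℝ)+1)) = 1 := by field_simp
        have h7 : ((m+1:ℕ):ℝ) * (1/((m:ℝ)+1)) = 1 := by push_cast; exact h6
        rwa [h7] at h5
      exact h4
    have hcast : ((m+1).factorial : ℝ) = ((m:ℝ)+1) * m.factorial := by
      rw [Nat.factorial_succ]; push_cast; ring
    have hexp : Real.exp ((m:ℕ)+1 : ℕ) = Real.exp m * Real.exp 1 := by
      push_cast; rw [← Real.exp_add]
    have hfm : (0:ℝ) ≤ (m.factorial : ℝ) := by positivity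
    calc ((m+1).factorial : ℝ) * Real.exp ((m+1:ℕ)) 
        = ((m:ℝ)+1) * Real.exp 1 * ((m.factorial:ℝ) * Real.exp m) := by
          rw [hcast]
          push_cast
          rw [Real.exp_add]
          ring
      _ ≤ ((m:ℝ)+1) * Real.exp 1 * (Real.exp 1 * (m:ℝ)^(m+1)) := by
          apply mul_le_mul_of_nonneg_left ih (by positivity)
      _ ≤ ((m:ℝ)+1) * Real.exp 1 * ((m:ℝ)+1)^(m+1) := by
          apply mul_le_mul_of_nonneg_left key (by positivity)
      _ = Real.exp 1 * ((m:ℝ)+1)^(m+2) := by ring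
      _ = Real.exp 1 * ((m+1:ℕ):ℝ)^(m+1+1) := by push_cast; ring

lemma log_fact_ub (n : ℕ) :
    Real.log n.factorial ≤ (n:ℝ) * Real.log n - n + (1 + Real.log n) := by
  rcases Nat.eq_zero_or_pos n with h | h
  · simp [h]
  have hn : (0:ℝ) < n := by exact_mod_cast h
  have hf : (0:ℝ) < n.factorial := by exact_mod_cast n.factorial_pos
  have h2 := fact_ub n h
  have h3 := Real.log_le_log (by positivity) h2
  rw [Real.log_mul (ne_of_gt hf) (Real.exp_ne_zero _), Real.log_exp,
      Real.log_mul (Real.exp_ne_zero _) (by positivity), Real.log_exp,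
      Real.log_pow] at h3
  push_cast at h3
  linarith

noncomputable def Efn (n : ℕ) : ℝ := Real.log n.factorial - ((n:ℝ) * Real.log n - n)

/-- If `k N i` (for `i = 0,…,s`) sum to `N` and `k N i / N → μ i ∈ [0,1]`,
then `(1/N) · ln(N! / ∏ᵢ (k N i)!) → −∑ᵢ μ i ln (μ i)` (with `0 · ln 0 = 0`,
which holds by `Real.log 0 = 0`). -/
theorem multinomial_log_asymptotics (s : ℕ) (hs : 1 ≤ s)
    (k : ℕ → Fin (s + 1) → ℕ) (hsum : ∀ N, ∑ i, k N i = N)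
    (μ : Fin (s + 1) → ℝ) (hμ : ∀ i, μ i ∈ Set.Icc (0 : ℝ) 1)
    (hlim : ∀ i, Tendsto (fun N => (k N i : ℝ) / N) atTop (𝓝 (μ i))) :
    Tendsto (fun N : ℕ => (1 / (N : ℝ)) *
        Real.log ((N.factorial : ℝ) / ∏ i, ((k N i).factorial : ℝ)))
      atTop (𝓝 (-∑ i, μ i * Real.log (μ i))) := by
  have hE0 : ∀ n, 0 ≤ Efn n := fun n => by
    have := log_fact_lb n; unfold Efn; linarith
  have hE1 : ∀ n, Efn n ≤ 1 + Real.log n := fun n => by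
    have := log_fact_ub n; unfold Efn; linarith
  -- main term tendsto
  have hg : Tendsto (fun N : ℕ => ∑ i, Real.negMulLog ((k N i : ℝ)/N)) atTop
      (𝓝 (∑ i, Real.negMulLog (μ i))) := by
    apply tendsto_finset_sum
    intro i _
    exact (Real.continuous_negMulLog.tendsto (μ i)).comp (hlim i)
  have hLeq : (∑ i, Real.negMulLog (μ i)) = -∑ i, μ i * Real.log (μ i) := by
    simp [Real.negMulLog_eq_neg]
  -- bound tendsto
  have h1 : Tendsto (fun N:ℕ => (1:ℝ)/N) atTop (𝓝 0) := tendsto_one_div_atTop_nhds_zero_nat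
  have h2 : Tendsto (fun N:ℕ => Real.log N / N) atTop (𝓝 0) :=
    (Real.isLittleO_log_id_atTop.tendsto_div_nhds_zero).comp tendsto_natCast_atTop_atTop
  have hb : Tendsto (fun N:ℕ => ((s:ℝ)+2)*(1+Real.log N)/N) atTop (𝓝 0) := by
    have h3 := (h1.add h2).const_mul ((s:ℝ)+2)
    norm_num at h3
    apply h3.congr
    intro N
    ring
  -- error term tendsto 0
  have herr : Tendsto (fun N:ℕ => (Efn N - ∑ i, Efn (k N i))/N) atTop (𝓝 0) := by
    apply squeeze_zero_norm' _ hb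
    filter_upwards [eventually_ge_atTop 1] with N hN1
    have hN : (0:ℝ) < N := by exact_mod_cast hN1
    have hlogN : 0 ≤ Real.log N := Real.log_nonneg (by exact_mod_cast hN1)
    have hki : ∀ i : Fin (s+1), Efn (k N i) ≤ 1 + Real.log N := by
      intro i
      refine le_trans (hE1 _) ?_
      have hle : k N i ≤ N := by
        have := hsum N
        calc k N i ≤ ∑ j, k N j := Finset.single_le_sum (fun j _ => Nat.zero_le _) (Finset.mem_univ i)
          _ = N := hsum N
      rcases Nat.eq_zero_or_pos (k N i) with h | h
      · simp [h]; linarith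
      · have : Real.log (k N i) ≤ Real.log N :=
          Real.log_le_log (by exact_mod_cast h) (by exact_mod_cast hle)
        linarith
    have hup : Efn N - ∑ i, Efn (k N i) ≤ ((s:ℝ)+2)*(1+Real.log N) := by
      have hsnn : 0 ≤ ∑ i, Efn (k N i) := Finset.sum_nonneg (fun i _ => hE0 _)
      have := hE1 N
      nlinarith [(Nat.cast_nonneg s : (0:ℝ) ≤ s)]
    have hlo : -(((s:ℝ)+2)*(1+Real.log N)) ≤ Efn N - ∑ i, Efn (k N i) := by
      have hsle : ∑ i, Efn (k N i) ≤ ((s:ℝ)+1)*(1+Real.log N) := by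
        calc ∑ i, Efn (k N i) ≤ ∑ _i : Fin (s+1), (1 + Real.log N) :=
              Finset.sum_le_sum (fun i _ => hki i)
          _ = ((s:ℝ)+1)*(1+Real.log N) := by
              rw [Finset.sum_const, Finset.card_univ, Fintype.card_fin]; push_cast; ring
      have := hE0 N
      nlinarith [(Nat.cast_nonneg s : (0:ℝ) ≤ s)]
    rw [Real.norm_eq_abs, abs_div, abs_of_pos hN]
    gcongr
    exact abs_le.mpr ⟨hlo, hup⟩
  -- key identity
  have key : ∀ N : ℕ, 1 ≤ N →
      (1/(N:ℝ)) * Real.log ((N.factorial:ℝ) / ∏ i, ((k N i).factorial:ℝ))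
        = (∑ i, Real.negMulLog ((k N i : ℝ)/N)) + (Efn N - ∑ i, Efn (k N i))/N := by
    intro N hN1
    have hN : (0:ℝ) < N := by exact_mod_cast hN1
    have hfp : ∀ i : Fin (s+1), (0:ℝ) < ((k N i).factorial : ℝ) :=
      fun i => by exact_mod_cast (k N i).factorial_pos
    have hpp : (0:ℝ) < ∏ i, ((k N i).factorial:ℝ) :=
      Finset.prod_pos (fun i _ => hfp i)
    have hNf : (0:ℝ) < (N.factorial:ℝ) := by exact_mod_cast N.factorial_pos
    rw [Real.log_div (ne_of_gt hNf) (ne_of_gt hpp),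
        Real.log_prod (fun i _ => ne_of_gt (hfp i))]
    have hks : (∑ i, (k N i : ℝ)) = (N:ℝ) := by
      rw [← Nat.cast_sum, hsum N]
    have hnml : ∀ i : Fin (s+1), Real.negMulLog ((k N i : ℝ)/N)
        = ((k N i:ℝ) * Real.log N - (k N i:ℝ) * Real.log (k N i))/N := by
      intro i
      rcases Nat.eq_zero_or_pos (k N i) with h | h
      · simp [h, Real.negMulLog]
      · have hk : (0:ℝ) < (k N i : ℝ) := by exact_mod_cast h
        rw [Real.negMulLog, Real.log_div (ne_of_gt hk) (ne_of_gt hN)]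
        field_simp
        ring
    have hsumnml : ∑ i, Real.negMulLog ((k N i : ℝ)/N)
        = ((N:ℝ) * Real.log N - ∑ i, (k N i:ℝ) * Real.log (k N i))/N := by
      rw [Finset.sum_congr rfl (fun i _ => hnml i), ← Finset.sum_div,
          Finset.sum_sub_distrib, ← Finset.sum_mul, hks]
    rw [hsumnml]
    have hsE : ∑ i, Efn (k N i) = (∑ i, Real.log ((k N i).factorial:ℝ))
        - ((∑ i, (k N i:ℝ) * Real.log (k N i)) - ∑ i, (k N i:ℝ)) := by
      unfold Efn
      rw [Finset.sum_sub_distrib, Finset.sum_sub_distrib]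
    rw [hsE, hks]
    unfold Efn
    field_simp
    ring
  -- assemble
  have hfinal := hg.add herr
  rw [add_zero, hLeq] at hfinal
  apply hfinal.congr'
  filter_upwards [eventually_ge_atTop 1] with N hN1
  exact (key N hN1).symm
end

section
/- Let q > 1 be a real number and s ≥ 1. For each n ∈ ℕ let k_1(n), …, k_s(n) be natural numbers with ∑_{i=1}^{s} k_i(n) = n, and suppose that for each i, k_i(n) → l_i as n → ∞, where l_i ∈ ℕ ∪ {∞}. Then [n; k_1(n),…,k_s(n)]_q / q^{ n² H₂(k_1(n)/n,…,k_s(n)/n) / 2 } → (q^{−1}; q^{−1})_∞^{1−s} · ∏_{i=1}^{s} (q^{−(l_i+1)}; q^{−1})_∞ as n → ∞, with the convention that (q^{−(l_i+1)}; q^{−1})_∞ = 1 when l_i = ∞. -/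
open Filter Topology

/-- The `q`-integer `[n]_q = (qⁿ − 1)/(q − 1)`. -/
noncomputable def qInt (q : ℝ) (n : ℕ) : ℝ := (q ^ n - 1) / (q - 1)

/-- The `q`-factorial `[n]_q! = ∏_{i=1}^n [i]_q`. -/
noncomputable def qFact (q : ℝ) (n : ℕ) : ℝ := ∏ i ∈ Finset.range n, qInt q (i + 1)

/-- The infinite `q`-Pochhammer symbol `(a; x)_∞ = ∏_{i=0}^∞ (1 − a xⁱ)`. -/
noncomputable def qPochInf (a x : ℝ) : ℝ := ∏' i : ℕ, (1 - a * x ^ i)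

/-- `(q^{−(l+1)}; q^{−1})_∞` for `l ∈ ℕ ∪ {∞}`, with the convention that it equals `1`
when `l = ∞`. -/
noncomputable def pochLimit (q : ℝ) (l : ℕ∞) : ℝ :=
  match l with
  | ⊤ => 1
  | (m : ℕ) => qPochInf (q⁻¹ ^ (m + 1)) q⁻¹

/- ### Auxiliary material -/

lemma aux_summable_log {t : ℝ} (ht0 : 0 < t) (ht1 : t < 1) :
    Summable (fun i : ℕ => Real.log (1 - t ^ (i + 1))) := by
  have hlt : ∀ i : ℕ, t ^ (i + 1) < 1 := fun i => pow_lt_one₀ ht0.le ht1 (by omega)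
  rw [← summable_neg_iff]
  have hge : ∀ i : ℕ, 0 ≤ -Real.log (1 - t ^ (i + 1)) := by
    intro i
    have : 1 - t ^ (i + 1) ≤ 1 := by have := pow_pos ht0 (i + 1); linarith
    simpa using Real.log_nonpos (by have := hlt i; linarith) this
  have hle : ∀ i : ℕ, -Real.log (1 - t ^ (i + 1)) ≤ (1 - t)⁻¹ * t ^ i := by
    intro i
    have hx1 : 0 < 1 - t ^ (i + 1) := by linarith [hlt i]
    have h2 := Real.log_le_sub_one_of_pos (inv_pos.2 hx1)
    rw [Real.log_inv] at h2
    have hti : t ^ (i + 1) ≤ t ^ i := pow_le_pow_of_le_one ht0.le ht1.le (by omega)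
    have h3 : (1 - t ^ (i + 1))⁻¹ - 1 = t ^ (i + 1) / (1 - t ^ (i + 1)) := by
      field_simp
      ring
    rw [h3] at h2
    have h4 : t ^ (i + 1) / (1 - t ^ (i + 1)) ≤ (1 - t)⁻¹ * t ^ i := by
      rw [div_le_iff₀ hx1]
      have h5 : (1:ℝ) - t ≤ 1 - t ^ (i + 1) := by
        have : t ^ (i + 1) ≤ t := by
          calc t ^ (i+1) ≤ t ^ 1 := pow_le_pow_of_le_one ht0.le ht1.le (by omega)
          _ = t := pow_one t
        linarith
      have h1t : (0:ℝ) < 1 - t := by linarith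
      calc t ^ (i + 1) ≤ t ^ i := hti
        _ = (1 - t)⁻¹ * t ^ i * (1 - t) := by field_simp
        _ ≤ (1 - t)⁻¹ * t ^ i * (1 - t ^ (i + 1)) := by
            apply mul_le_mul_of_nonneg_left h5
            positivity
    linarith
  apply Summable.of_nonneg_of_le hge hle
  exact (summable_geometric_of_lt_one ht0.le ht1).mul_left _

lemma aux_pos {t : ℝ} (ht0 : 0 < t) (ht1 : t < 1) (m : ℕ) : 0 < 1 - t ^ (m + 1) := by
  have : t ^ (m + 1) < 1 := pow_lt_one₀ ht0.le ht1 (by omega)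
  linarith

lemma aux_hasProd {t : ℝ} (ht0 : 0 < t) (ht1 : t < 1) (k : ℕ) :
    HasProd (fun i : ℕ => 1 - t ^ (i + k + 1))
      (Real.exp (∑' i : ℕ, Real.log (1 - t ^ (i + k + 1)))) := by
  have hsum : Summable (fun i : ℕ => Real.log (1 - t ^ (i + k + 1))) := by
    have := (_root_.summable_nat_add_iff (f := fun i : ℕ => Real.log (1 - t ^ (i + 1))) k).2
      (aux_summable_log ht0 ht1)
    simpa using this
  exact hsum.hasSum.rexp.congr_fun
    (fun i => (Real.exp_log (aux_pos ht0 ht1 (i + k))).symm)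

/-- Partial products of `(t; t)`-Pochhammer type. -/
noncomputable def Ppart (t : ℝ) (m : ℕ) : ℝ := ∏ i ∈ Finset.range m, (1 - t ^ (i + 1))

lemma Ppart_pos {t : ℝ} (ht0 : 0 < t) (ht1 : t < 1) (m : ℕ) : 0 < Ppart t m :=
  Finset.prod_pos fun i _ => aux_pos ht0 ht1 i

lemma qPochInf_eq_tprod {t : ℝ} :
    qPochInf t t = ∏' i : ℕ, (1 - t ^ (i + 1)) := by
  unfold qPochInf
  congr 1
  funext i
  rw [pow_succ, mul_comm]

lemma aux_hasProd0 {t : ℝ} (ht0 : 0 < t) (ht1 : t < 1) :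
    HasProd (fun i : ℕ => 1 - t ^ (i + 1)) (qPochInf t t) := by
  have h := aux_hasProd ht0 ht1 0
  simp only [Nat.add_zero] at h
  rw [qPochInf_eq_tprod, h.tprod_eq]
  exact h

lemma qPochInf_pos {t : ℝ} (ht0 : 0 < t) (ht1 : t < 1) : 0 < qPochInf t t := by
  have h := aux_hasProd ht0 ht1 0
  simp only [Nat.add_zero] at h
  rw [qPochInf_eq_tprod, h.tprod_eq]
  exact Real.exp_pos _

lemma tendsto_Ppart {t : ℝ} (ht0 : 0 < t) (ht1 : t < 1) :
    Tendsto (Ppart t) atTop (𝓝 (qPochInf t t)) :=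
  (aux_hasProd0 ht0 ht1).tendsto_prod_nat

lemma Ppart_mul_poch {t : ℝ} (ht0 : 0 < t) (ht1 : t < 1) (m : ℕ) :
    Ppart t m * qPochInf (t ^ (m + 1)) t = qPochInf t t := by
  have hshift : qPochInf (t ^ (m + 1)) t = ∏' i : ℕ, (1 - t ^ (i + m + 1)) := by
    unfold qPochInf
    congr 1
    funext i
    congr 1
    rw [← pow_add]
    ring_nf
  rw [hshift, qPochInf_eq_tprod]
  exact Multipliable.prod_mul_tprod_nat_mul' (f := fun i : ℕ => 1 - t ^ (i + 1)) (k := m)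
    (aux_hasProd ht0 ht1 m).multipliable

lemma pochLimit_coe_eq {t : ℝ} (ht0 : 0 < t) (ht1 : t < 1) (m : ℕ) :
    qPochInf (t ^ (m + 1)) t = qPochInf t t / Ppart t m := by
  rw [eq_div_iff (Ppart_pos ht0 ht1 m).ne', mul_comm]
  exact Ppart_mul_poch ht0 ht1 m

lemma qFact_eq {q : ℝ} (hq : 1 < q) (m : ℕ) :
    qFact q m = q ^ (∑ i ∈ Finset.range m, (i + 1)) * Ppart q⁻¹ m / (q - 1) ^ m := by
  have hq0 : q ≠ 0 := by positivity
  unfold qFact Ppart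
  have hconst : ((q:ℝ) - 1) ^ m = ∏ _i ∈ Finset.range m, (q - 1) := by
    rw [Finset.prod_const, Finset.card_range]
  rw [← Finset.prod_pow_eq_pow_sum, ← Finset.prod_mul_distrib, hconst,
    ← Finset.prod_div_distrib]
  apply Finset.prod_congr rfl
  intro i _
  unfold qInt
  congr 1
  rw [inv_pow]
  field_simp

/-- The limit of `Ppart t (k n i)`. -/
noncomputable def Laux (t : ℝ) (l : ℕ∞) : ℝ :=
  match l with
  | ⊤ => qPochInf t t
  | (m : ℕ) => Ppart t m

lemma Laux_top (t : ℝ) : Laux t ⊤ = qPochInf t t := rfl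

lemma Laux_coe (t : ℝ) (m : ℕ) : Laux t (m : ℕ∞) = Ppart t m := rfl

lemma pochLimit_top (q : ℝ) : pochLimit q ⊤ = 1 := rfl

lemma pochLimit_coe (q : ℝ) (m : ℕ) :
    pochLimit q (m : ℕ∞) = qPochInf (q⁻¹ ^ (m + 1)) q⁻¹ := rfl

lemma c_cast (m : ℕ) : ((∑ i ∈ Finset.range m, (i + 1) : ℕ) : ℝ) = ((m : ℝ) ^ 2 + m) / 2 := by
  induction m with
  | zero => simp
  | succ n ih =>
    rw [Finset.sum_range_succ]
    push_cast
    push_cast at ih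
    rw [ih]
    ring

/-- Asymptotics of the `q`-multinomial coefficients: if
`k₁(n) + ⋯ + k_s(n) = n` and `kᵢ(n) → lᵢ ∈ ℕ ∪ {∞}`, then
`[n; k₁(n),…,k_s(n)]_q / q^{n² H₂(k₁(n)/n,…,k_s(n)/n)/2}
  → (q⁻¹; q⁻¹)_∞^{1−s} · ∏ᵢ (q^{−(lᵢ+1)}; q⁻¹)_∞`. -/
theorem qMultinomial_asymptotics (q : ℝ) (hq : 1 < q) (s : ℕ) (hs : 1 ≤ s)
    (k : ℕ → Fin s → ℕ) (hsum : ∀ n, ∑ i, k n i = n)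
    (l : Fin s → ℕ∞)
    (hl : ∀ i, Tendsto (fun n => (k n i : ℕ∞)) atTop (𝓝 (l i))) :
    Tendsto (fun n : ℕ =>
        (qFact q n / ∏ i, qFact q (k n i)) /
          q ^ ((n : ℝ) ^ 2 * (1 - ∑ i, ((k n i : ℝ) / n) ^ 2) / 2))
      atTop
      (𝓝 (qPochInf q⁻¹ q⁻¹ ^ ((1 : ℤ) - s) * ∏ i, pochLimit q (l i))) := by
  have hq0 : (0:ℝ) < q := by linarith
  set t : ℝ := q⁻¹ with ht_def
  have ht0 : 0 < t := inv_pos.2 hq0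
  have ht1 : t < 1 := inv_lt_one_of_one_lt₀ hq
  set P : ℕ → ℝ := Ppart t with hP
  set Pinf : ℝ := qPochInf t t with hPinf
  have hPpos : ∀ m, 0 < P m := Ppart_pos ht0 ht1
  have hPinf_pos : 0 < Pinf := qPochInf_pos ht0 ht1
  -- The actual limit of P (k n i)
  set L : Fin s → ℝ := fun i => Laux t (l i) with hL
  have hLpos : ∀ i, 0 < L i := by
    intro i
    have hLi : L i = Laux t (l i) := rfl
    rw [hLi]
    cases l i with
    | top => rw [Laux_top]; exact hPinf_pos
    | coe m => rw [Laux_coe]; exact hPpos m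
  -- Step 1: Tendsto of each P (k n i)
  have htend : ∀ i, Tendsto (fun n => P (k n i)) atTop (𝓝 (L i)) := by
    intro i
    have hLi : L i = Laux t (l i) := rfl
    rw [hLi]
    cases hli : l i with
    | top =>
      rw [Laux_top]
      have h1 : Tendsto (fun n => k n i) atTop atTop := by
        rw [tendsto_atTop]
        intro m
        have := (ENat.tendsto_nhds_top_iff_natCast_lt.1 (hli ▸ hl i)) m
        filter_upwards [this] with n hn
        exact_mod_cast hn.le
      exact (tendsto_Ppart ht0 ht1).comp h1
    | coe m =>
      rw [Laux_coe]
      have h1 : ∀ᶠ n in atTop, k n i = m := by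
        have h2 := hl i
        rw [hli, ENat.nhds_eq_pure (by simp)] at h2
        filter_upwards [tendsto_pure.1 h2] with n hn
        exact_mod_cast hn
      apply Tendsto.congr' (by filter_upwards [h1] with n hn; rw [hn]) tendsto_const_nhds
  -- Step 2: limit of the simplified sequence
  have hmain : Tendsto (fun n => P n / ∏ i, P (k n i)) atTop (𝓝 (Pinf / ∏ i, L i)) := by
    apply Tendsto.div (tendsto_Ppart ht0 ht1) (tendsto_finset_prod _ fun i _ => htend i)
    exact (Finset.prod_pos fun i _ => hLpos i).ne'
  -- Step 3: value of the limit
  have hval : Pinf / ∏ i, L i = qPochInf q⁻¹ q⁻¹ ^ ((1 : ℤ) - s) * ∏ i, pochLimit q (l i) := by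
    have hpoch : ∀ i, pochLimit q (l i) = Pinf / L i := by
      intro i
      have hLi : L i = Laux t (l i) := rfl
      rw [hLi]
      cases l i with
      | top => rw [pochLimit_top, Laux_top, ← hPinf, div_self hPinf_pos.ne']
      | coe m =>
        rw [pochLimit_coe, Laux_coe, hPinf]
        exact pochLimit_coe_eq ht0 ht1 m
    rw [Finset.prod_congr rfl fun i _ => hpoch i, Finset.prod_div_distrib,
      Finset.prod_const, Finset.card_univ, Fintype.card_fin, ← hPinf]
    rw [zpow_sub₀ hPinf_pos.ne', zpow_one, zpow_natCast]
    have hprodL : (∏ i, L i) ≠ 0 := (Finset.prod_pos fun i _ => hLpos i).ne'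
    have hPs : Pinf ^ s ≠ 0 := pow_ne_zero _ hPinf_pos.ne'
    field_simp
  rw [← hval]
  -- Step 4: eventual equality of the two sequences
  apply Tendsto.congr' _ hmain
  filter_upwards [eventually_ge_atTop 1] with n hn
  have hn0 : (n:ℝ) ≠ 0 := by positivity
  set c : ℕ → ℕ := fun m => ∑ i ∈ Finset.range m, (i + 1) with hc
  -- rewrite the exponent
  have hE : (n : ℝ) ^ 2 * (1 - ∑ i, ((k n i : ℝ) / n) ^ 2) / 2
      = (c n : ℝ) - ((∑ i, c (k n i) : ℕ) : ℝ) := by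
    push_cast
    rw [c_cast]
    rw [Finset.sum_congr rfl (fun (i : Fin s) _ => c_cast (k n i))]
    have hks : (∑ i, (k n i : ℝ)) = n := by
      rw [← Nat.cast_sum]; exact_mod_cast congrArg (Nat.cast : ℕ → ℝ) (hsum n)
    rw [← Finset.sum_div, Finset.sum_add_distrib, hks]
    have : (∑ i, ((k n i : ℝ) / n) ^ 2) = (∑ i, (k n i : ℝ) ^ 2) / (n:ℝ)^2 := by
      rw [Finset.sum_div]
      exact Finset.sum_congr rfl fun i _ => by rw [div_pow]
    rw [this]
    field_simp
    ring
  rw [hE]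
  have hrw : q ^ ((c n : ℝ) - ((∑ i, c (k n i) : ℕ) : ℝ))
      = q ^ (c n) / q ^ (∑ i, c (k n i)) := by
    rw [Real.rpow_sub hq0, Real.rpow_natCast, Real.rpow_natCast]
  rw [hrw]
  -- rewrite the factorials
  rw [qFact_eq hq n, Finset.prod_congr rfl (fun (i : Fin s) _ => qFact_eq hq (k n i))]
  rw [Finset.prod_div_distrib, Finset.prod_mul_distrib, Finset.prod_pow_eq_pow_sum,
    Finset.prod_pow_eq_pow_sum, hsum n]
  have hA : (q : ℝ) ^ (c n) ≠ 0 := by positivity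
  have hB : (q : ℝ) ^ (∑ i, c (k n i)) ≠ 0 := by positivity
  have hC : ((q : ℝ) - 1) ^ n ≠ 0 := by
    apply pow_ne_zero; intro h; linarith [sub_eq_zero.1 h]
  have hPn : P n ≠ 0 := (hPpos n).ne'
  have hPk : (∏ i, P (k n i)) ≠ 0 := (Finset.prod_pos fun i _ => hPpos _).ne'
  rw [← hP]
  field_simp
  simp only [hc]
  ring
end

section
/- Let q > 1 be a real number and s ≥ 1. For each n let k_1(n), …, k_s(n) be natural numbers with ∑_{i=1}^{s} k_i(n) = n, and suppose k_i(n)/n → μ_i ∈ [0,1] as n → ∞ for each i. Then (2/n²) · log_q [n; k_1(n),…,k_s(n)]_q → H₂(μ_1,…,μ_s) = 1 − ∑_{i=1}^{s} μ_i² as n → ∞. -/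
open Filter Topology

noncomputable def myE (q : ℝ) (n : ℕ) : ℝ :=
  ∑ i ∈ Finset.range n, Real.log (1 - (q ^ (i + 1))⁻¹)

lemma qpow_gt_one {q : ℝ} (hq : 1 < q) (n : ℕ) : 1 < q ^ (n + 1) :=
  one_lt_pow₀ hq (Nat.succ_ne_zero n)

lemma qInt_pos {q : ℝ} (hq : 1 < q) (n : ℕ) : 0 < qInt q (n + 1) :=
  div_pos (by linarith [qpow_gt_one hq n]) (by linarith)

lemma qFact_pos {q : ℝ} (hq : 1 < q) (n : ℕ) : 0 < qFact q n :=
  Finset.prod_pos fun i _ => qInt_pos hq i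

lemma log_qFact {q : ℝ} (hq : 1 < q) (n : ℕ) :
    Real.log (qFact q n) =
      (n * (n + 1) : ℝ) / 2 * Real.log q - n * Real.log (q - 1) + myE q n := by
  induction n with
  | zero => simp [qFact, myE]
  | succ n ih =>
    have hpow : (1:ℝ) < q ^ (n + 1) := qpow_gt_one hq n
    have h1 : qFact q (n + 1) = qFact q n * qInt q (n + 1) := by
      rw [qFact, Finset.prod_range_succ]; rfl
    have hinv : (q ^ (n+1))⁻¹ < 1 := inv_lt_one_of_one_lt₀ hpow
    have hfac : (0:ℝ) < 1 - (q ^ (n+1))⁻¹ := by linarith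
    have h2 : qInt q (n + 1) = q ^ (n+1) * (1 - (q ^ (n+1))⁻¹) / (q - 1) := by
      rw [qInt, mul_sub, mul_inv_cancel₀ (by positivity), mul_one]
    have hlog : Real.log (qInt q (n + 1)) =
        (n + 1 : ℝ) * Real.log q + Real.log (1 - (q ^ (n+1))⁻¹) - Real.log (q - 1) := by
      rw [h2, Real.log_div (mul_pos (by positivity) hfac).ne' (by linarith : (0:ℝ) < q - 1).ne',
        Real.log_mul (by positivity) hfac.ne', Real.log_pow]
      push_cast; ring
    rw [h1, Real.log_mul (qFact_pos hq n).ne' (qInt_pos hq n).ne', ih, hlog]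
    simp only [myE, Finset.sum_range_succ]
    push_cast; ring

lemma abs_myE_le {q : ℝ} (hq : 1 < q) (n : ℕ) :
    |myE q n| ≤ q⁻¹ / (1 - q⁻¹) ^ 2 := by
  set x := q⁻¹ with hx
  have hx0 : 0 < x := inv_pos.mpr (by linarith)
  have hx1 : x < 1 := inv_lt_one_of_one_lt₀ hq
  have hterm : ∀ i : ℕ, |Real.log (1 - (q ^ (i + 1))⁻¹)| ≤ x ^ (i + 1) / (1 - x) := by
    intro i
    have hxe : (q ^ (i + 1))⁻¹ = x ^ (i + 1) := by rw [hx, inv_pow]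
    have hp0 : 0 < x ^ (i + 1) := pow_pos hx0 _
    have hp1 : x ^ (i + 1) ≤ x := pow_le_of_le_one hx0.le hx1.le (Nat.succ_ne_zero i)
    have hy0 : 0 < 1 - x ^ (i + 1) := by linarith
    have hlogle : Real.log (1 - x ^ (i + 1)) ≤ 0 := Real.log_nonpos (by linarith) (by linarith)
    have h2 := Real.log_le_sub_one_of_pos (inv_pos.mpr hy0)
    rw [Real.log_inv] at h2
    have h3 : (1 - x ^ (i + 1))⁻¹ - 1 ≤ x ^ (i + 1) / (1 - x) := by
      rw [inv_eq_one_div, div_sub' hy0.ne', div_le_div_iff₀ hy0 (by linarith)]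
      nlinarith
    rw [hxe, abs_of_nonpos hlogle]
    linarith
  calc |myE q n| ≤ ∑ i ∈ Finset.range n, x ^ (i + 1) / (1 - x) :=
        (Finset.abs_sum_le_sum_abs _ _).trans (Finset.sum_le_sum fun i _ => hterm i)
    _ = (∑ i ∈ Finset.range n, x ^ (i + 1)) / (1 - x) := by rw [Finset.sum_div]
    _ ≤ (x / (1 - x)) / (1 - x) := by
        gcongr
        · calc ∑ i ∈ Finset.range n, x ^ (i + 1) = x * ∑ i ∈ Finset.range n, x ^ i := by
                rw [Finset.mul_sum]; exact Finset.sum_congr rfl fun i _ => by ring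
            _ ≤ x * (1 / (1 - x)) := by
                gcongr
                rw [geom_sum_eq hx1.ne, ← neg_sub (1:ℝ) (x ^ n), ← neg_sub (1:ℝ) x,
                  neg_div_neg_eq]
                gcongr
                · nlinarith [pow_pos hx0 n]
            _ = x / (1 - x) := by ring
    _ = x / (1 - x) ^ 2 := by rw [div_div, sq]

/-- If `k₁(n) + ⋯ + k_s(n) = n` and `kᵢ(n)/n → μᵢ ∈ [0,1]`, then
`(2/n²) log_q [n; k₁(n),…,k_s(n)]_q → H₂(μ₁,…,μ_s) = 1 − ∑ᵢ μᵢ²`. -/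
theorem qMultinomial_log_asymptotics (q : ℝ) (hq : 1 < q) (s : ℕ) (hs : 1 ≤ s)
    (k : ℕ → Fin s → ℕ) (hsum : ∀ n, ∑ i, k n i = n)
    (μ : Fin s → ℝ) (hμ : ∀ i, μ i ∈ Set.Icc (0 : ℝ) 1)
    (hlim : ∀ i, Tendsto (fun n => (k n i : ℝ) / n) atTop (𝓝 (μ i))) :
    Tendsto (fun n : ℕ =>
        2 / (n : ℝ) ^ 2 *
          (Real.log (qFact q n / ∏ i, qFact q (k n i)) / Real.log q))
      atTop (𝓝 (1 - ∑ i, μ i ^ 2)) := by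
  have hL : 0 < Real.log q := Real.log_pos hq
  set C : ℝ := q⁻¹ / (1 - q⁻¹) ^ 2 with hC
  have hC0 : 0 ≤ C := by
    have := abs_myE_le hq 0
    exact (abs_nonneg _).trans this
  -- the two pieces
  set f : ℕ → ℝ := fun n => 1 - ∑ i, ((k n i : ℝ) / n) ^ 2 with hf
  set g : ℕ → ℝ := fun n =>
    2 / (n : ℝ) ^ 2 * ((myE q n - ∑ i, myE q (k n i)) / Real.log q) with hg
  have hfg : ∀ n : ℕ, 1 ≤ n →
      2 / (n : ℝ) ^ 2 *
          (Real.log (qFact q n / ∏ i, qFact q (k n i)) / Real.log q) = f n + g n := by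
    intro n hn
    have hn0 : (0:ℝ) < n := by exact_mod_cast hn
    have hprodpos : (0:ℝ) < ∏ i, qFact q (k n i) :=
      Finset.prod_pos fun i _ => qFact_pos hq _
    have h1 : Real.log (qFact q n / ∏ i, qFact q (k n i)) =
        Real.log (qFact q n) - ∑ i, Real.log (qFact q (k n i)) := by
      rw [Real.log_div (qFact_pos hq n).ne' hprodpos.ne',
        Real.log_prod fun i _ => (qFact_pos hq _).ne']
    have hKsum : ∑ i, (k n i : ℝ) = n := by
      rw [← Nat.cast_sum, hsum]
    have h2 : ∑ i, Real.log (qFact q (k n i)) =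
        (∑ i, ((k n i : ℝ))^2 + n) / 2 * Real.log q - n * Real.log (q - 1)
          + ∑ i, myE q (k n i) := by
      have expand : ∀ i ∈ Finset.univ, Real.log (qFact q (k n i)) =
          (((k n i : ℝ))^2 + (k n i : ℝ)) / 2 * Real.log q
            - (k n i : ℝ) * Real.log (q - 1) + myE q (k n i) := fun i _ => by
        rw [log_qFact hq]; ring
      rw [Finset.sum_congr rfl expand, Finset.sum_add_distrib, Finset.sum_sub_distrib,
        ← Finset.sum_mul, ← Finset.sum_mul, ← Finset.sum_div,
        Finset.sum_add_distrib, hKsum]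
    have hsq : ∑ i, ((k n i : ℝ) / n) ^ 2 = (∑ i, ((k n i : ℝ))^2) / (n:ℝ)^2 := by
      rw [Finset.sum_div]
      exact Finset.sum_congr rfl fun i _ => by rw [div_pow]
    rw [h1, log_qFact hq n, h2, hf, hg]
    simp only [hsq]
    field_simp
    ring
  have hftend : Tendsto f atTop (𝓝 (1 - ∑ i, μ i ^ 2)) := by
    exact tendsto_const_nhds.sub <|
      tendsto_finset_sum _ fun i _ => (hlim i).pow 2
  have hgtend : Tendsto g atTop (𝓝 0) := by
    have hb : Tendsto (fun n : ℕ => 2 / (n:ℝ)^2 * ((1 + s) * C / Real.log q))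
        atTop (𝓝 0) := by
      have h2n : Tendsto (fun n : ℕ => 2 / (n:ℝ)^2) atTop (𝓝 0) := by
        apply Tendsto.div_atTop tendsto_const_nhds
        exact (tendsto_pow_atTop two_ne_zero).comp tendsto_natCast_atTop_atTop
      simpa using h2n.mul_const ((1 + s) * C / Real.log q)
    apply squeeze_zero_norm _ hb
    intro n
    have hΔ : |myE q n - ∑ i, myE q (k n i)| ≤ (1 + s) * C := by
      calc |myE q n - ∑ i, myE q (k n i)| ≤ |myE q n| + |∑ i, myE q (k n i)| :=
            abs_sub _ _
        _ ≤ C + ∑ i, |myE q (k n i)| := by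
            gcongr
            · exact abs_myE_le hq n
            · exact Finset.abs_sum_le_sum_abs _ _
        _ ≤ C + ∑ _i : Fin s, C := by
            gcongr with i
            exact abs_myE_le hq _
        _ = (1 + s) * C := by
            simp [Finset.sum_const, Finset.card_univ]
            ring
    have h2 : (0:ℝ) ≤ 2 / (n:ℝ)^2 := by positivity
    calc ‖g n‖ = 2 / (n:ℝ)^2 * (|myE q n - ∑ i, myE q (k n i)| / Real.log q) := by
          rw [hg]
          rw [Real.norm_eq_abs, abs_mul, abs_of_nonneg h2, abs_div,
            abs_of_pos hL]
      _ ≤ 2 / (n:ℝ)^2 * ((1 + s) * C / Real.log q) := by gcongr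
  have := hftend.add hgtend
  rw [add_zero] at this
  apply this.congr'
  filter_upwards [eventually_ge_atTop 1] with n hn
  exact (hfg n hn).symm
end

section
/- Let q > 1 and θ > 0 be real numbers and d ∈ ℕ fixed. Then lim_{n→∞} [n; n−d]_q · θ^{n−d} · q^{(n−d)(n−d−1)/2} / (−θ; q)_n = μ(d), where μ(d) = q^{ −½(d − (½ − log_q θ))² + ½(½ − log_q θ)² } · (q^{−(d+1)}; q^{−1})_∞ / [ (q^{−1}; q^{−1})_∞ · (−θ^{−1}; q^{−1})_∞ ]. -/
open Filter Topology Finset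

/-- The `q`-binomial coefficient `[n; k]_q = [n]_q!/([k]_q!·[n−k]_q!)`. -/
noncomputable def qBinom (q : ℝ) (n k : ℕ) : ℝ := qFact q n / (qFact q k * qFact q (n - k))

/-- The `q`-Pochhammer symbol `(a; x)_n = ∏_{i=0}^{n−1} (1 − a xⁱ)`. -/
noncomputable def qPoch (a x : ℝ) (n : ℕ) : ℝ := ∏ i ∈ Finset.range n, (1 - a * x ^ i)

/-- A product with factors ≥ 1 and bounded finite subproducts has a product L ≥ 1. -/
lemma aux_hasProd_of_one_le_of_bdd (h : ℕ → ℝ) (h1 : ∀ i, 1 ≤ h i) (B : ℝ)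
    (hB : ∀ s : Finset ℕ, ∏ i ∈ s, h i ≤ B) : ∃ L, 1 ≤ L ∧ HasProd h L := by
  have hne : (Set.range fun s : Finset ℕ => ∏ i ∈ s, h i).Nonempty := ⟨_, ⟨∅, rfl⟩⟩
  have hbdd : BddAbove (Set.range fun s : Finset ℕ => ∏ i ∈ s, h i) := by
    refine ⟨B, ?_⟩
    rintro _ ⟨s, rfl⟩
    exact hB s
  have hlub := isLUB_csSup hne hbdd
  have hone : ∀ s : Finset ℕ, (1:ℝ) ≤ ∏ i ∈ s, h i := by
    intro s
    calc (1:ℝ) = ∏ _i ∈ s, (1:ℝ) := by simp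
      _ ≤ ∏ i ∈ s, h i := Finset.prod_le_prod (by simp) (fun i _ => h1 i)
  have hmono : Monotone fun s : Finset ℕ => ∏ i ∈ s, h i := by
    intro s t hst
    have := Finset.prod_sdiff hst (f := h)
    dsimp only
    rw [← this]
    exact le_mul_of_one_le_left (le_trans zero_le_one (hone s)) (hone _)
  refine ⟨_, hlub.1 ⟨∅, by simp⟩, tendsto_atTop_isLUB hmono hlub⟩

lemma aux_geom_sum_bound (c r : ℝ) (hc : 0 ≤ c) (hr0 : 0 ≤ r) (hr1 : r < 1)
    (s : Finset ℕ) : ∑ i ∈ s, c * r ^ i ≤ c * (1 - r)⁻¹ := by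
  have hsum : Summable (fun i : ℕ => c * r ^ i) :=
    (summable_geometric_of_lt_one hr0 hr1).mul_left c
  calc ∑ i ∈ s, c * r ^ i ≤ ∑' i : ℕ, c * r ^ i :=
        hsum.sum_le_tsum s (fun i _ => by positivity)
    _ = c * (1 - r)⁻¹ := by rw [tsum_mul_left, tsum_geometric_of_lt_one hr0 hr1]

lemma aux_hasProd_one_add (c r : ℝ) (hc : 0 ≤ c) (hr0 : 0 ≤ r) (hr1 : r < 1) :
    ∃ L, 1 ≤ L ∧ HasProd (fun i : ℕ => 1 + c * r ^ i) L := by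
  refine aux_hasProd_of_one_le_of_bdd _ (fun i => by nlinarith [pow_nonneg hr0 i]) 
    (Real.exp (c * (1 - r)⁻¹)) (fun s => ?_)
  calc ∏ i ∈ s, (1 + c * r ^ i) ≤ ∏ i ∈ s, Real.exp (c * r ^ i) := by
        refine Finset.prod_le_prod (fun i _ => by nlinarith [pow_nonneg hr0 i]) 
          (fun i _ => by linarith [Real.add_one_le_exp (c * r ^ i)])
    _ = Real.exp (∑ i ∈ s, c * r ^ i) := by rw [Real.exp_sum]
    _ ≤ Real.exp (c * (1 - r)⁻¹) :=
        Real.exp_le_exp.2 (aux_geom_sum_bound c r hc hr0 hr1 s)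

lemma aux_hasProd_one_sub (a r : ℝ) (ha0 : 0 ≤ a) (ha1 : a < 1) (hr0 : 0 ≤ r) (hr1 : r < 1) :
    ∃ L, 0 < L ∧ HasProd (fun i : ℕ => 1 - a * r ^ i) L := by
  set c : ℝ := a * (1 - a)⁻¹ with hcdef
  have hc : 0 ≤ c := by
    have : (0:ℝ) < 1 - a := by linarith
    positivity
  have key : ∀ i : ℕ, 1 ≤ (1 - a * r ^ i)⁻¹ ∧ (1 - a * r ^ i)⁻¹ ≤ 1 + c * r ^ i := by
    intro i
    have hri0 : 0 ≤ r ^ i := pow_nonneg hr0 i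
    have hri1 : r ^ i ≤ 1 := pow_le_one₀ hr0 hr1.le
    have hpos : 0 < 1 - a * r ^ i := by nlinarith
    constructor
    · rw [le_inv_comm₀ one_pos hpos]
      nlinarith
    · rw [inv_le_iff_one_le_mul₀ hpos]
      have h1a : (0:ℝ) < 1 - a := by linarith
      have hca : c - a = a * c := by
        rw [hcdef]
        field_simp
        ring
      nlinarith [mul_nonneg (mul_nonneg (mul_nonneg ha0 hc) hri0) (sub_nonneg.2 hri1)]
  obtain ⟨L, hL1, hL⟩ := aux_hasProd_of_one_le_of_bdd (fun i => (1 - a * r ^ i)⁻¹)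
    (fun i => (key i).1) (Real.exp (c * (1 - r)⁻¹)) (by
      intro s
      calc ∏ i ∈ s, (1 - a * r ^ i)⁻¹ ≤ ∏ i ∈ s, (1 + c * r ^ i) :=
            Finset.prod_le_prod (fun i _ => le_trans zero_le_one (key i).1)
              (fun i _ => (key i).2)
        _ ≤ ∏ i ∈ s, Real.exp (c * r ^ i) :=
            Finset.prod_le_prod (fun i _ => by nlinarith [pow_nonneg hr0 i, (key i).1])
              (fun i _ => by linarith [Real.add_one_le_exp (c * r ^ i)])
        _ = Real.exp (∑ i ∈ s, c * r ^ i) := by rw [Real.exp_sum]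
        _ ≤ Real.exp (c * (1 - r)⁻¹) :=
            Real.exp_le_exp.2 (aux_geom_sum_bound c r hc hr0 hr1 s))
  have hL0 : 0 < L := lt_of_lt_of_le one_pos hL1
  refine ⟨L⁻¹, by positivity, ?_⟩
  have hne : ∀ i : ℕ, (1 - a * r ^ i) ≠ 0 := by
    intro i
    have := (key i).1
    intro h
    rw [h] at this
    simp at this
    linarith
  have : Tendsto (fun s : Finset ℕ => (∏ i ∈ s, (1 - a * r ^ i)⁻¹)⁻¹) atTop (𝓝 L⁻¹) :=
    Tendsto.inv₀ hL hL0.ne'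
  refine this.congr fun s => ?_
  rw [← Finset.prod_inv_distrib]
  exact Finset.prod_congr rfl fun i _ => inv_inv _

lemma key_eq (q θ : ℝ) (hq : 1 < q) (hθ : 0 < θ) (d m : ℕ) :
    qBinom q (m + d) m * θ ^ m * q ^ (m * (m - 1) / 2) / qPoch (-θ) q (m + d)
      = (∏ i ∈ Finset.range d, (1 - q⁻¹ ^ (m + i + 1))) /
        (θ ^ d * q ^ (d * (d - 1) / 2) * (∏ i ∈ Finset.range d, (1 - q⁻¹ ^ (i + 1))) *
          (∏ i ∈ Finset.range (m + d), (1 + θ⁻¹ * q⁻¹ ^ i))) := by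
  have hq0 : (0:ℝ) < q := lt_trans one_pos hq
  have hqne : q ≠ 0 := hq0.ne'
  have hθne : θ ≠ 0 := hθ.ne'
  have hq1 : q - 1 ≠ 0 := by intro h; nlinarith
  have hqinv1 : q⁻¹ < 1 := by
    rw [inv_lt_one_iff₀]; right; exact hq
  have hqinv0 : (0:ℝ) < q⁻¹ := by positivity
  have hfac : ∀ k : ℕ, q ^ k - 1 = q ^ k * (1 - q⁻¹ ^ k) := by
    intro k; rw [inv_pow]; field_simp
  have honelt : ∀ k : ℕ, k ≠ 0 → 1 < q ^ k := fun k hk => one_lt_pow₀ hq hk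
  have hqint_pos : ∀ k : ℕ, 0 < qInt q (k + 1) := by
    intro k
    have := honelt (k+1) (Nat.succ_ne_zero k)
    exact div_pos (by linarith) (by linarith)
  have hFact_pos : ∀ k : ℕ, 0 < qFact q k := by
    intro k
    exact Finset.prod_pos fun i _ => hqint_pos i
  -- abbreviations
  set A := ∏ i ∈ Finset.range d, (1 - q⁻¹ ^ (m + i + 1)) with hA
  set D := ∏ i ∈ Finset.range d, (1 - q⁻¹ ^ (i + 1)) with hD
  set V := ∏ i ∈ Finset.range (m + d), (1 + θ⁻¹ * q⁻¹ ^ i) with hV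
  have hsub1 : ∀ k : ℕ, (0:ℝ) < 1 - q⁻¹ ^ (k + 1) := by
    intro k
    have : q⁻¹ ^ (k+1) < 1 := pow_lt_one₀ hqinv0.le hqinv1 (Nat.succ_ne_zero k)
    linarith
  have hDpos : 0 < D := Finset.prod_pos fun i _ => hsub1 i
  have hApos : 0 < A := Finset.prod_pos fun i _ => by
    have := hsub1 (m + i); simpa [add_assoc] using this
  have hVpos : 0 < V := Finset.prod_pos fun i _ => by positivity
  -- numerator product
  have hNum : (∏ i ∈ Finset.range d, (q ^ (m + i + 1) - 1))
      = q ^ (∑ i ∈ Finset.range d, (m + i + 1)) * A := by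
    rw [hA, ← Finset.prod_pow_eq_pow_sum, ← Finset.prod_mul_distrib]
    exact Finset.prod_congr rfl fun i _ => hfac _
  have hDen : (∏ i ∈ Finset.range d, (q ^ (i + 1) - 1))
      = q ^ (∑ i ∈ Finset.range d, (i + 1)) * D := by
    rw [hD, ← Finset.prod_pow_eq_pow_sum, ← Finset.prod_mul_distrib]
    exact Finset.prod_congr rfl fun i _ => hfac _
  -- Pochhammer
  have hPoch : qPoch (-θ) q (m + d)
      = θ ^ (m + d) * q ^ (∑ i ∈ Finset.range (m + d), i) * V := by
    rw [qPoch, hV, ← Finset.prod_pow_eq_pow_sum]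
    rw [show θ ^ (m+d) = ∏ _i ∈ Finset.range (m+d), θ by
      rw [Finset.prod_const, Finset.card_range]]
    rw [← Finset.prod_mul_distrib, ← Finset.prod_mul_distrib]
    refine Finset.prod_congr rfl fun i _ => ?_
    have hqi : q ^ i ≠ 0 := pow_ne_zero i hqne
    rw [inv_pow]
    field_simp
    ring
  -- factorials
  have hFactm : ∀ k : ℕ, (∏ i ∈ Finset.range k, qInt q (i+1))
      = (∏ i ∈ Finset.range k, (q ^ (i+1) - 1)) / (q-1) ^ k := by
    intro k
    calc ∏ i ∈ Finset.range k, qInt q (i+1)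
        = ∏ i ∈ Finset.range k, ((q ^ (i+1) - 1) / (q-1)) :=
          Finset.prod_congr rfl fun i _ => rfl
      _ = (∏ i ∈ Finset.range k, (q ^ (i+1) - 1)) / ∏ _i ∈ Finset.range k, (q-1) :=
          Finset.prod_div_distrib _ _
      _ = (∏ i ∈ Finset.range k, (q ^ (i+1) - 1)) / (q-1) ^ k := by
          rw [Finset.prod_const, Finset.card_range]
  have hsplit : qFact q (m + d)
      = qFact q m * ((∏ i ∈ Finset.range d, (q ^ (m + i + 1) - 1)) / (q-1) ^ d) := by
    rw [qFact, Finset.prod_range_add]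
    congr 1
    calc ∏ x ∈ Finset.range d, qInt q (m + x + 1)
        = ∏ i ∈ Finset.range d, ((q ^ (m + i + 1) - 1) / (q-1)) :=
          Finset.prod_congr rfl fun i _ => rfl
      _ = (∏ i ∈ Finset.range d, (q ^ (m + i + 1) - 1)) / ∏ _i ∈ Finset.range d, (q-1) :=
          Finset.prod_div_distrib _ _
      _ = (∏ i ∈ Finset.range d, (q ^ (m + i + 1) - 1)) / (q-1) ^ d := by
          rw [Finset.prod_const, Finset.card_range]
  have hBinom : qBinom q (m + d) m
      = (q ^ (∑ i ∈ Finset.range d, (m + i + 1)) * A)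
        / (q ^ (∑ i ∈ Finset.range d, (i + 1)) * D) := by
    rw [qBinom, Nat.add_sub_cancel_left, hsplit,
      show qFact q d = (∏ i ∈ Finset.range d, (q ^ (i+1) - 1)) / (q-1) ^ d from hFactm d,
      hNum, hDen]
    have hF := (hFact_pos m).ne'
    have hq1p : (q-1:ℝ) ≠ 0 := hq1
    have hQ1 : (q:ℝ) ^ (∑ i ∈ Finset.range d, (i + 1)) ≠ 0 := by positivity
    field_simp
  -- exponent identity
  have hsums : (∑ i ∈ Finset.range d, (m + i + 1)) + (∑ i ∈ Finset.range m, i)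
        + (∑ i ∈ Finset.range d, i)
      = (∑ i ∈ Finset.range d, (i + 1)) + (∑ i ∈ Finset.range (m + d), i) := by
    rw [Finset.sum_range_add]
    simp only [Finset.sum_add_distrib, Finset.sum_const, Finset.card_range, smul_eq_mul,
      mul_one]
    ring
  have hqpow : q ^ (∑ i ∈ Finset.range d, (m + i + 1)) * q ^ (∑ i ∈ Finset.range m, i)
        * q ^ (∑ i ∈ Finset.range d, i)
      = q ^ (∑ i ∈ Finset.range d, (i + 1)) * q ^ (∑ i ∈ Finset.range (m + d), i) := by
    rw [← pow_add, ← pow_add, ← pow_add, hsums]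
  -- assemble
  rw [hBinom, hPoch]
  rw [show m * (m - 1) / 2 = ∑ i ∈ Finset.range m, i from (Finset.sum_range_id m).symm,
      show d * (d - 1) / 2 = ∑ i ∈ Finset.range d, i from (Finset.sum_range_id d).symm]
  rw [div_eq_div_iff (by positivity) (by positivity), div_mul_eq_mul_div,
    div_mul_eq_mul_div, div_mul_eq_mul_div, div_eq_iff (by positivity), pow_add θ m d]
  linear_combination (A * D * V * θ^m * θ^d) * hqpow

/-- For real `q > 1`, `θ > 0` and fixed `d ∈ ℕ`,
`[n; n−d]_q θ^{n−d} q^{(n−d)(n−d−1)/2}/(−θ; q)_n → μ(d)` as `n → ∞`, where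
`μ(d) = q^{−½(d−(½−log_q θ))² + ½(½−log_q θ)²} (q^{−(d+1)}; q⁻¹)_∞ /
  ((q⁻¹; q⁻¹)_∞ (−θ⁻¹; q⁻¹)_∞)`. -/
theorem grassmannian_codim_probability_limit (q θ : ℝ) (hq : 1 < q) (hθ : 0 < θ) (d : ℕ) :
    Tendsto (fun n : ℕ =>
        qBinom q n (n - d) * θ ^ (n - d) * q ^ ((n - d) * (n - d - 1) / 2) /
          qPoch (-θ) q n)
      atTop
      (𝓝 (q ^ (-(1 / 2 : ℝ) * ((d : ℝ) - (1 / 2 - Real.log θ / Real.log q)) ^ 2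
              + (1 / 2 : ℝ) * (1 / 2 - Real.log θ / Real.log q) ^ 2) *
            qPochInf (q⁻¹ ^ (d + 1)) q⁻¹ /
            (qPochInf q⁻¹ q⁻¹ * qPochInf (-θ⁻¹) q⁻¹))) := by
  have hq0 : (0:ℝ) < q := lt_trans one_pos hq
  have hθne : θ ≠ 0 := hθ.ne'
  have hqinv1 : q⁻¹ < 1 := by rw [inv_lt_one_iff₀]; right; exact hq
  have hqinv0 : (0:ℝ) ≤ q⁻¹ := by positivity
  have hθinv0 : (0:ℝ) ≤ θ⁻¹ := by positivity
  obtain ⟨LP, hLP1, hLP⟩ := aux_hasProd_one_add θ⁻¹ q⁻¹ hθinv0 hqinv0 hqinv1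
  obtain ⟨L1, hL1pos, hL1⟩ := aux_hasProd_one_sub q⁻¹ q⁻¹ hqinv0 hqinv1 hqinv0 hqinv1
  obtain ⟨Ld, hLdpos, hLd⟩ := aux_hasProd_one_sub (q⁻¹ ^ (d+1)) q⁻¹
    (pow_nonneg hqinv0 _) (pow_lt_one₀ hqinv0 hqinv1 (Nat.succ_ne_zero d)) hqinv0 hqinv1
  set D := ∏ i ∈ Finset.range d, (1 - q⁻¹ ^ (i + 1)) with hD
  have hsub1 : ∀ k : ℕ, (0:ℝ) < 1 - q⁻¹ ^ (k + 1) := by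
    intro k
    have : q⁻¹ ^ (k+1) < 1 := pow_lt_one₀ hqinv0 hqinv1 (Nat.succ_ne_zero k)
    linarith
  have hDpos : 0 < D := Finset.prod_pos fun i _ => hsub1 i
  have hLP0 : LP ≠ 0 := by linarith
  -- split of the infinite product
  have hsplitL : L1 = D * Ld := by
    have h1 : Tendsto (fun n : ℕ => ∏ i ∈ Finset.range (n + d), (1 - q⁻¹ * q⁻¹ ^ i))
        atTop (𝓝 L1) := hL1.tendsto_prod_nat.comp (tendsto_add_atTop_nat d)
    have hDeq : ∀ n : ℕ, ∏ i ∈ Finset.range (n + d), (1 - q⁻¹ * q⁻¹ ^ i)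
        = D * ∏ i ∈ Finset.range n, (1 - q⁻¹ ^ (d+1) * q⁻¹ ^ i) := by
      intro n
      rw [add_comm n d, Finset.prod_range_add]
      congr 1
      · rw [hD]
        exact Finset.prod_congr rfl fun i _ => by rw [pow_succ']
      · exact Finset.prod_congr rfl fun i _ => by rw [pow_add]; ring_nf
    have h2 : Tendsto (fun n : ℕ => ∏ i ∈ Finset.range (n + d), (1 - q⁻¹ * q⁻¹ ^ i))
        atTop (𝓝 (D * Ld)) :=
      (tendsto_const_nhds.mul hLd.tendsto_prod_nat).congr fun n => (hDeq n).symm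
    exact tendsto_nhds_unique h1 h2
  -- identify the qPochInf values
  have hPinfV : qPochInf (-θ⁻¹) q⁻¹ = LP := by
    rw [qPochInf]
    rw [show (fun i : ℕ => 1 - -θ⁻¹ * q⁻¹ ^ i) = fun i : ℕ => 1 + θ⁻¹ * q⁻¹ ^ i from
      funext fun i => by ring]
    exact hLP.tprod_eq
  have hPinf1 : qPochInf q⁻¹ q⁻¹ = L1 := hL1.tprod_eq
  have hPinfd : qPochInf (q⁻¹ ^ (d+1)) q⁻¹ = Ld := hLd.tprod_eq
  -- the exponent computation
  have hlogq : Real.log q ≠ 0 := (Real.log_pos hq).ne'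
  have hqt : q ^ (Real.log θ / Real.log q) = θ := by
    rw [Real.rpow_def_of_pos hq0]
    rw [show Real.log q * (Real.log θ / Real.log q) = Real.log θ by field_simp]
    exact Real.exp_log hθ
  have hcast : ((d * (d - 1) / 2 : ℕ) : ℝ) = (d:ℝ) * ((d:ℝ) - 1) / 2 := by
    rcases Nat.eq_zero_or_pos d with h | h
    · subst h; simp
    · obtain ⟨k, rfl⟩ : ∃ k, d = k + 1 := ⟨d - 1, by omega⟩
      have he : (2:ℕ) ∣ (k+1) * ((k+1) - 1) := by
        simpa [Nat.add_sub_cancel, Nat.mul_comm] using (Nat.even_mul_succ_self k).two_dvd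
      rw [Nat.cast_div he (by norm_num)]
      push_cast
      ring
  have hE : q ^ (-(1 / 2 : ℝ) * ((d : ℝ) - (1 / 2 - Real.log θ / Real.log q)) ^ 2
        + (1 / 2 : ℝ) * (1 / 2 - Real.log θ / Real.log q) ^ 2)
      = ((θ:ℝ) ^ d)⁻¹ * ((q:ℝ) ^ (d * (d - 1) / 2 : ℕ))⁻¹ := by
    rw [show -(1 / 2 : ℝ) * ((d : ℝ) - (1 / 2 - Real.log θ / Real.log q)) ^ 2
        + (1 / 2 : ℝ) * (1 / 2 - Real.log θ / Real.log q) ^ 2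
        = (Real.log θ / Real.log q) * (-(d:ℝ)) + (-((d * (d - 1) / 2 : ℕ) : ℝ)) by
      rw [hcast]; ring]
    rw [Real.rpow_add hq0, Real.rpow_mul hq0.le, hqt, Real.rpow_neg hq0.le,
      Real.rpow_neg hθ.le, Real.rpow_natCast, Real.rpow_natCast]
  -- the limit of the explicit sequence
  set C : ℝ := ((θ:ℝ) ^ d * (q:ℝ) ^ (d * (d - 1) / 2 : ℕ) * D)⁻¹ with hC
  have hAten : Tendsto (fun n : ℕ => ∏ i ∈ Finset.range d, (1 - q⁻¹ ^ (n - d + i + 1)))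
      atTop (𝓝 1) := by
    have h := tendsto_finset_prod (f := fun (i : ℕ) (n : ℕ) => 1 - q⁻¹ ^ (n - d + i + 1))
      (x := atTop) (a := fun _ => (1:ℝ)) (Finset.range d) (fun i _ => ?_)
    · simpa using h
    · have ht : Tendsto (fun n : ℕ => n - d + i + 1) atTop atTop :=
        tendsto_atTop_atTop.2 fun b => ⟨b + d, fun n hn => by omega⟩
      have hexp : Tendsto (fun n : ℕ => q⁻¹ ^ (n - d + i + 1)) atTop (𝓝 0) :=
        (tendsto_pow_atTop_nhds_zero_of_lt_one hqinv0 hqinv1).comp ht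
      simpa using tendsto_const_nhds.sub hexp
  have hVten : Tendsto (fun n : ℕ => ∏ i ∈ Finset.range n, (1 + θ⁻¹ * q⁻¹ ^ i))
      atTop (𝓝 LP) := hLP.tendsto_prod_nat
  have hmain : Tendsto (fun n : ℕ =>
      C * (∏ i ∈ Finset.range d, (1 - q⁻¹ ^ (n - d + i + 1)))
        / ∏ i ∈ Finset.range n, (1 + θ⁻¹ * q⁻¹ ^ i)) atTop (𝓝 (C * 1 / LP)) :=
    (tendsto_const_nhds.mul hAten).div hVten hLP0
  have heq : (fun n : ℕ =>
      C * (∏ i ∈ Finset.range d, (1 - q⁻¹ ^ (n - d + i + 1)))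
        / ∏ i ∈ Finset.range n, (1 + θ⁻¹ * q⁻¹ ^ i)) =ᶠ[atTop] (fun n : ℕ =>
      qBinom q n (n - d) * θ ^ (n - d) * q ^ ((n - d) * (n - d - 1) / 2) /
          qPoch (-θ) q n) := by
    filter_upwards [eventually_ge_atTop d] with n hn
    obtain ⟨m, rfl⟩ : ∃ m, n = m + d := ⟨n - d, by omega⟩
    simp only [Nat.add_sub_cancel]
    rw [key_eq q θ hq hθ d m, hC, ← hD]
    rw [inv_mul_eq_div, div_div]
  have hfinal := hmain.congr' heq
  convert hfinal using 2
  rw [hPinfV, hPinf1, hPinfd, hsplitL, hE]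
  have hLPpos : (0:ℝ) < LP := lt_of_lt_of_le one_pos hLP1
  have hθd : (θ:ℝ) ^ d ≠ 0 := by positivity
  have hqN : (q:ℝ) ^ (d * (d - 1) / 2 : ℕ) ≠ 0 := by positivity
  rw [hC, mul_one, div_eq_div_iff (by positivity) hLP0, mul_inv, mul_inv]
  have hDD : D⁻¹ * D = 1 := inv_mul_cancel₀ hDpos.ne'
  linear_combination (-1 * (θ ^ d)⁻¹ * ((q:ℝ) ^ (d * (d - 1) / 2 : ℕ))⁻¹ * Ld * LP) * hDD
end

section
/- Let q ≥ 2 and θ > 0 be real numbers, and for d ∈ ℕ define μ(d) = q^{ −½(d − (½ − log_q θ))² + ½(½ − log_q θ)² } · (q^{−(d+1)}; q^{−1})_∞ / [ (q^{−1}; q^{−1})_∞ · (−θ^{−1}; q^{−1})_∞ ]. Then ∑_{d=0}^{∞} μ(d) = 1. -/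
open Real Filter Finset
set_option maxHeartbeats 1000000

lemma aux_abs_log_le {v : ℝ} (hv : -(1/2) ≤ v) : |Real.log (1 + v)| ≤ 2 * |v| := by
  rcases le_or_gt 0 v with h | h
  · rw [abs_of_nonneg (Real.log_nonneg (by linarith)), abs_of_nonneg h]
    have := Real.log_le_sub_one_of_pos (show (0:ℝ) < 1 + v by linarith)
    linarith
  · have h1 : (0:ℝ) < 1 + v := by linarith
    rw [abs_of_nonpos (Real.log_nonpos (by linarith) (by linarith)), abs_of_neg h]
    have e1 : 1 - 2*v ≤ Real.exp (-(2*v)) := by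
      have := Real.add_one_le_exp (-(2*v)); linarith
    have e2 : Real.exp (2*v) ≤ (1 - 2*v)⁻¹ := by
      have h2 : (0:ℝ) < 1 - 2*v := by linarith
      have := inv_anti₀ h2 e1
      rwa [← Real.exp_neg, neg_neg] at this
    have e3 : (1 - 2*v)⁻¹ ≤ 1 + v := by
      rw [inv_eq_one_div, div_le_iff₀ (by linarith)]
      nlinarith
    have : 2*v ≤ Real.log (1 + v) :=
      (Real.le_log_iff_exp_le h1).2 (e2.trans e3)
    linarith

lemma aux_hasProd_s11 {u : ℕ → ℝ} (hu : Summable u) (hb : ∀ i, -(1/2:ℝ) ≤ u i) :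
    HasProd (fun i => 1 + u i) (Real.exp (∑' i, Real.log (1 + u i))) := by
  have hpos : ∀ i, (0:ℝ) < 1 + u i := fun i => by have := hb i; linarith
  have hsl : Summable fun i => Real.log (1 + u i) := by
    apply Summable.of_norm_bounded ((hu.abs).mul_left 2)
    intro i
    simpa [Real.norm_eq_abs] using aux_abs_log_le (hb i)
  have key := hsl.hasSum.rexp
  have : (Real.exp ∘ fun i => Real.log (1 + u i)) = fun i => 1 + u i :=
    funext fun i => Real.exp_log (hpos i)
  exact this ▸ key

/-- `μ(d) = q^{−½(d−(½−log_q θ))² + ½(½−log_q θ)²} (q^{−(d+1)}; q⁻¹)_∞ /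
  ((q⁻¹; q⁻¹)_∞ (−θ⁻¹; q⁻¹)_∞)`. -/
noncomputable def grassMu (q θ : ℝ) (d : ℕ) : ℝ :=
  q ^ (-(1 / 2 : ℝ) * ((d : ℝ) - (1 / 2 - Real.log θ / Real.log q)) ^ 2
        + (1 / 2 : ℝ) * (1 / 2 - Real.log θ / Real.log q) ^ 2) *
    qPochInf (q⁻¹ ^ (d + 1)) q⁻¹ /
    (qPochInf q⁻¹ q⁻¹ * qPochInf (-θ⁻¹) q⁻¹)

section Main
variable {x : ℝ} (hx0 : 0 < x) (hx : x ≤ 1/2)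

/-- finite Pochhammer `(x;x)_d`. -/
noncomputable def Pfin (x : ℝ) (d : ℕ) : ℝ := ∏ i ∈ range d, (1 - x ^ (i+1))

/-- Euler coefficient `A d = x^C(d,2) / (x;x)_d`. -/
noncomputable def Acoef (x : ℝ) (d : ℕ) : ℝ := x ^ (d.choose 2) / Pfin x d

include hx0 hx

lemma Pfin_pos (d : ℕ) : 0 < Pfin x d := by
  apply Finset.prod_pos
  intro i _
  have : x ^ (i+1) ≤ x := pow_le_of_le_one hx0.le (by linarith) (by omega)
  linarith

lemma Pfin_ge (d : ℕ) : (1-x)^d ≤ Pfin x d := by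
  unfold Pfin
  have hc : (1-x)^d = ∏ _i ∈ range d, (1-x) := by simp
  rw [hc]
  apply Finset.prod_le_prod
  · intro i _; linarith
  · intro i _
    have : x ^ (i+1) ≤ x := pow_le_of_le_one hx0.le (by linarith) (by omega)
    linarith

omit hx0 hx in
lemma Pfin_succ (d : ℕ) : Pfin x (d+1) = Pfin x d * (1 - x ^ (d+1)) := by
  unfold Pfin; rw [Finset.prod_range_succ]

lemma Acoef_pos (d : ℕ) : 0 < Acoef x d :=
  div_pos (pow_pos hx0 _) (Pfin_pos hx0 hx d)

omit hx0 hx in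
lemma Acoef_zero : Acoef x 0 = 1 := by simp [Acoef, Pfin]

lemma Acoef_succ (d : ℕ) : Acoef x (d+1) * (1 - x ^ (d+1)) = Acoef x d * x ^ d := by
  have h1 : (d+1).choose 2 = d.choose 2 + d := by
    rw [Nat.choose_succ_succ]
    simp [Nat.choose_one_right, Nat.add_comm]
  have hp := Pfin_pos hx0 hx d
  have hq : (0:ℝ) < 1 - x ^ (d+1) := by
    have : x ^ (d+1) ≤ x := pow_le_of_le_one hx0.le (by linarith) (by omega)
    linarith
  rw [Acoef, Acoef, Pfin_succ, h1, pow_add]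
  field_simp

lemma summable_Acoef_mul {w : ℝ} (hw : 0 ≤ w) : Summable (fun d => Acoef x d * w ^ d) := by
  apply summable_of_ratio_norm_eventually_le (r := 1/2) (by norm_num)
  have hlim : Filter.Tendsto (fun d : ℕ => x ^ d * w * 2) atTop (nhds 0) := by
    simpa using (tendsto_pow_atTop_nhds_zero_of_lt_one hx0.le (by linarith)).mul_const w
      |>.mul_const 2
  filter_upwards [hlim.eventually_le_const (by norm_num : (0:ℝ) < 1/2)] with d hd
  have hq : (0:ℝ) < 1 - x ^ (d+1) := by
    have : x ^ (d+1) ≤ x := pow_le_of_le_one hx0.le (by linarith) (by omega)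
    linarith
  have ha := Acoef_pos hx0 hx d
  have ha1 := Acoef_pos hx0 hx (d+1)
  have hA : Acoef x (d+1) = Acoef x d * x ^ d / (1 - x ^ (d+1)) := by
    rw [eq_div_iff hq.ne']; exact Acoef_succ hx0 hx d
  have key : Acoef x (d+1) * w ^ (d+1) = (Acoef x d * w ^ d) * (x ^ d * w / (1 - x ^ (d+1))) := by
    rw [hA, pow_succ]; ring
  rw [Real.norm_eq_abs, Real.norm_eq_abs, key,
    abs_of_nonneg (by positivity), abs_of_nonneg (by positivity)]
  have hb : x ^ d * w / (1 - x ^ (d+1)) ≤ 1/2 := by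
    rw [div_le_iff₀ hq]
    have h2 : 1 - x ^ (d+1) ≥ 1/2 := by
      have : x ^ (d+1) ≤ x := pow_le_of_le_one hx0.le (by linarith) (by omega)
      linarith
    nlinarith [pow_nonneg hx0.le d]
  calc Acoef x d * w ^ d * (x ^ d * w / (1 - x ^ (d+1)))
      ≤ Acoef x d * w ^ d * (1/2) := by
        apply mul_le_mul_of_nonneg_left hb (by positivity)
    _ = 1/2 * (Acoef x d * w ^ d) := by ring

end Main

section Main2
variable {x : ℝ} (hx0 : 0 < x) (hx : x ≤ 1/2)

/-- Euler's generating function `∑ x^C(d,2) z^d / (x;x)_d`. -/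
noncomputable def fEuler (x z : ℝ) : ℝ := ∑' d : ℕ, Acoef x d * z ^ d

/-- The product `(−z; x)_∞ = ∏ (1 + z xⁱ)`. -/
noncomputable def Gval (x z : ℝ) : ℝ := ∏' i : ℕ, (1 + z * x ^ i)

include hx0 hx

lemma summable_geom_mul (z : ℝ) : Summable (fun i : ℕ => z * x ^ i) :=
  (summable_geometric_of_lt_one hx0.le (by linarith)).mul_left z

lemma G_hasProd {z : ℝ} (hz : 0 ≤ z) :
    HasProd (fun i : ℕ => 1 + z * x ^ i)
      (Real.exp (∑' i : ℕ, Real.log (1 + z * x ^ i))) := by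
  apply aux_hasProd_s11 (summable_geom_mul hx0 hx z)
  intro i
  have : 0 ≤ z * x ^ i := by positivity
  linarith

lemma Gval_eq_exp {z : ℝ} (hz : 0 ≤ z) :
    Gval x z = Real.exp (∑' i : ℕ, Real.log (1 + z * x ^ i)) :=
  (G_hasProd hx0 hx hz).tprod_eq

lemma Gval_pos {z : ℝ} (hz : 0 ≤ z) : 0 < Gval x z := by
  rw [Gval_eq_exp hx0 hx hz]; exact Real.exp_pos _

lemma fEuler_rec {z : ℝ} (hz : 0 ≤ z) : fEuler x z = (1 + z) * fEuler x (x * z) := by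
  have sz := summable_Acoef_mul hx0 hx hz
  have s1 := summable_Acoef_mul hx0 hx (show (0:ℝ) ≤ x * z by positivity)
  set D : ℕ → ℝ := fun d => Acoef x d * z ^ d - Acoef x d * (x * z) ^ d with hDdef
  have hD : Summable D := sz.sub s1
  have hD0 : D 0 = 0 := by simp [hDdef]
  have hDs : ∀ d, D (d+1) = z * (Acoef x d * (x * z) ^ d) := by
    intro d
    have h := Acoef_succ hx0 hx d
    simp only [hDdef, mul_pow]
    linear_combination z^(d+1) * h
  have e1 : ∑' d : ℕ, D d = fEuler x z - fEuler x (x * z) := by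
    rw [hDdef, Summable.tsum_sub sz s1]; rfl
  have e2 : ∑' d : ℕ, D d = z * fEuler x (x * z) := by
    rw [Summable.tsum_eq_zero_add hD, hD0, zero_add]
    simp only [hDs]
    rw [tsum_mul_left]
    rfl
  have h := e1.symm.trans e2
  linear_combination h

lemma fEuler_iter {z : ℝ} (hz : 0 ≤ z) (n : ℕ) :
    fEuler x z = (∏ i ∈ Finset.range n, (1 + x ^ i * z)) * fEuler x (x ^ n * z) := by
  induction n with
  | zero => simp
  | succ n ih =>
    rw [Finset.prod_range_succ, ih]
    have h1 : fEuler x (x ^ n * z) = (1 + x ^ n * z) * fEuler x (x * (x ^ n * z)) :=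
      fEuler_rec hx0 hx (by positivity)
    rw [h1]
    have : x * (x ^ n * z) = x ^ (n+1) * z := by ring
    rw [this]
    ring

lemma Gval_iter {z : ℝ} (hz : 0 ≤ z) (n : ℕ) :
    Gval x z = (∏ i ∈ Finset.range n, (1 + x ^ i * z)) * Gval x (x ^ n * z) := by
  have hm : Multipliable (fun i : ℕ => 1 + z * x ^ (i + n)) := by
    apply ((G_hasProd hx0 hx (show (0:ℝ) ≤ x ^ n * z by positivity)).multipliable).congr
    intro i
    rw [pow_add]; ring
  have key := Multipliable.prod_mul_tprod_nat_mul' (f := fun i : ℕ => 1 + z * x ^ i) (k := n) hm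
  have h1 : (∏ i ∈ Finset.range n, (1 + z * x ^ i)) =
      ∏ i ∈ Finset.range n, (1 + x ^ i * z) := by
    apply Finset.prod_congr rfl; intro i _; ring
  have h2 : (∏' i : ℕ, (1 + z * x ^ (i + n))) = Gval x (x ^ n * z) := by
    apply tprod_congr; intro i
    rw [pow_add]; ring
  rw [h1, h2] at key
  exact key.symm

lemma fEuler_lower {w : ℝ} (hw : 0 ≤ w) : 1 ≤ fEuler x w := by
  have hs := summable_Acoef_mul hx0 hx hw
  have h := Summable.le_tsum hs 0 (fun i _ => by
    have := (Acoef_pos hx0 hx i).le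
    positivity)
  rw [fEuler]
  calc (1:ℝ) = Acoef x 0 * w ^ 0 := by simp [Acoef_zero]
    _ ≤ _ := h

lemma fEuler_upper {w : ℝ} (hw : 0 ≤ w) (hw1 : w ≤ 1) :
    fEuler x w ≤ 1 + (∑' d : ℕ, Acoef x d) * w := by
  have hs := summable_Acoef_mul hx0 hx hw
  have hC : Summable (fun d => Acoef x d) := by
    simpa using summable_Acoef_mul hx0 hx (by norm_num : (0:ℝ) ≤ 1)
  have hCs : Summable (fun d => Acoef x (d+1)) := (summable_nat_add_iff 1).2 hC
  have e0 : fEuler x w = 1 + ∑' d : ℕ, Acoef x (d+1) * w ^ (d+1) := by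
    rw [fEuler, Summable.tsum_eq_zero_add hs]
    simp [Acoef_zero]
  rw [e0]
  have step1 : ∑' d : ℕ, Acoef x (d+1) * w ^ (d+1) ≤ ∑' d : ℕ, Acoef x (d+1) * w := by
    have hsum1 : Summable (fun d : ℕ => Acoef x (d+1) * w ^ (d+1)) := by
      exact_mod_cast (summable_nat_add_iff 1).2 hs
    apply Summable.tsum_le_tsum _ hsum1 (hCs.mul_right w)
    intro d
    apply mul_le_mul_of_nonneg_left _ (Acoef_pos hx0 hx (d+1)).le
    calc w ^ (d+1) ≤ w ^ 1 := pow_le_pow_of_le_one hw hw1 (by omega)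
      _ = w := pow_one w
  have step2 : ∑' d : ℕ, Acoef x (d+1) * w = (∑' d : ℕ, Acoef x (d+1)) * w := tsum_mul_right
  have step3 : (∑' d : ℕ, Acoef x (d+1)) ≤ ∑' d : ℕ, Acoef x d := by
    have := Summable.tsum_eq_zero_add hC
    have h0 : (0:ℝ) ≤ Acoef x 0 := (Acoef_pos hx0 hx 0).le
    linarith [this]
  have := mul_le_mul_of_nonneg_right step3 hw
  linarith

lemma tendsto_pow_mul {z : ℝ} :
    Filter.Tendsto (fun n : ℕ => x ^ n * z) atTop (nhds 0) := by
  simpa using (tendsto_pow_atTop_nhds_zero_of_lt_one hx0.le (by linarith)).mul_const z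

lemma tendsto_fEuler {z : ℝ} (hz : 0 ≤ z) :
    Filter.Tendsto (fun n : ℕ => fEuler x (x ^ n * z)) atTop (nhds 1) := by
  have hw := tendsto_pow_mul hx0 hx (z := z)
  have hub : Filter.Tendsto (fun n : ℕ => 1 + (∑' d : ℕ, Acoef x d) * (x ^ n * z)) atTop
      (nhds 1) := by
    have := (hw.const_mul (∑' d : ℕ, Acoef x d)).const_add 1
    simpa using this
  apply tendsto_of_tendsto_of_tendsto_of_le_of_le' tendsto_const_nhds hub
  · filter_upwards with n
    exact fEuler_lower hx0 hx (by positivity)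
  · filter_upwards [hw.eventually_le_const (zero_lt_one)] with n hn
    exact fEuler_upper hx0 hx (by positivity) hn

lemma Gval_lower {w : ℝ} (hw : 0 ≤ w) : 1 ≤ Gval x w := by
  rw [Gval_eq_exp hx0 hx hw]
  have h0 : (0:ℝ) ≤ ∑' i : ℕ, Real.log (1 + w * x ^ i) := by
    apply tsum_nonneg
    intro i
    apply Real.log_nonneg
    have : 0 ≤ w * x ^ i := by positivity
    linarith
  have := Real.add_one_le_exp (∑' i : ℕ, Real.log (1 + w * x ^ i))
  linarith

lemma Gval_upper {w : ℝ} (hw : 0 ≤ w) : Gval x w ≤ Real.exp (w * (1-x)⁻¹) := by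
  rw [Gval_eq_exp hx0 hx hw]
  apply Real.exp_le_exp.2
  have hsl : Summable fun i : ℕ => Real.log (1 + w * x ^ i) := by
    apply Summable.of_norm_bounded (((summable_geom_mul hx0 hx w).abs).mul_left 2)
    intro i
    apply aux_abs_log_le
    have : 0 ≤ w * x ^ i := by positivity
    linarith
  have step1 : (∑' i : ℕ, Real.log (1 + w * x ^ i)) ≤ ∑' i : ℕ, w * x ^ i := by
    apply Summable.tsum_le_tsum _ hsl (summable_geom_mul hx0 hx w)
    intro i
    have hp : (0:ℝ) < 1 + w * x ^ i := by positivity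
    have := Real.log_le_sub_one_of_pos hp
    linarith
  have step2 : (∑' i : ℕ, w * x ^ i) = w * (1-x)⁻¹ := by
    rw [tsum_mul_left, tsum_geometric_of_lt_one hx0.le (by linarith)]
  linarith

lemma tendsto_Gval {z : ℝ} (hz : 0 ≤ z) :
    Filter.Tendsto (fun n : ℕ => Gval x (x ^ n * z)) atTop (nhds 1) := by
  have hw := tendsto_pow_mul hx0 hx (z := z)
  have hub : Filter.Tendsto (fun n : ℕ => Real.exp ((x ^ n * z) * (1-x)⁻¹)) atTop
      (nhds 1) := by
    have h1 : Filter.Tendsto (fun n : ℕ => (x ^ n * z) * (1-x)⁻¹) atTop (nhds 0) := by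
      simpa using hw.mul_const (1-x)⁻¹
    have := (Real.continuous_exp.tendsto 0).comp h1
    simpa [Function.comp_def] using this
  apply tendsto_of_tendsto_of_tendsto_of_le_of_le' tendsto_const_nhds hub
  · filter_upwards with n
    exact Gval_lower hx0 hx (by positivity)
  · filter_upwards with n
    exact Gval_upper hx0 hx (by positivity)

/-- Euler's identity: `∑ x^C(d,2) z^d/(x;x)_d = ∏ (1+z xⁱ)`. -/
lemma fEuler_eq_Gval {z : ℝ} (hz : 0 ≤ z) : fEuler x z = Gval x z := by
  have key : ∀ n : ℕ, fEuler x z * Gval x (x ^ n * z) = Gval x z * fEuler x (x ^ n * z) := by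
    intro n
    rw [fEuler_iter hx0 hx hz n, Gval_iter hx0 hx hz n]
    ring
  have t1 : Filter.Tendsto (fun n : ℕ => fEuler x z * Gval x (x ^ n * z)) atTop
      (nhds (fEuler x z)) := by
    simpa using (tendsto_Gval hx0 hx hz).const_mul (fEuler x z)
  have t2 : Filter.Tendsto (fun n : ℕ => fEuler x z * Gval x (x ^ n * z)) atTop
      (nhds (Gval x z)) := by
    have := (tendsto_fEuler hx0 hx hz).const_mul (Gval x z)
    simp only [key]
    simpa using this
  exact tendsto_nhds_unique t1 t2

end Main2

section Final
variable {x : ℝ} (hx0 : 0 < x) (hx : x ≤ 1/2)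
include hx0 hx

lemma tail_hasProd (d : ℕ) :
    HasProd (fun i : ℕ => 1 - x ^ (d+1) * x ^ i)
      (Real.exp (∑' i : ℕ, Real.log (1 - x ^ (d+1) * x ^ i))) := by
  have hb : ∀ i : ℕ, -(1/2:ℝ) ≤ -(x ^ (d+1) * x ^ i) := by
    intro i
    have h1 : x ^ (d+1) * x ^ i = x ^ (d+1+i) := (pow_add x (d+1) i).symm
    have h2 : x ^ (d+1+i) ≤ x := pow_le_of_le_one hx0.le (by linarith) (by omega)
    rw [h1]; linarith
  have hu : Summable (fun i : ℕ => -(x ^ (d+1) * x ^ i)) :=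
    ((summable_geometric_of_lt_one hx0.le (by linarith)).mul_left (x ^ (d+1))).neg
  have key := aux_hasProd_s11 hu hb
  have he : (fun i : ℕ => 1 + -(x ^ (d+1) * x ^ i)) = fun i : ℕ => 1 - x ^ (d+1) * x ^ i := by
    funext i; ring
  rw [he] at key
  have he2 : (fun i : ℕ => Real.log (1 + -(x ^ (d+1) * x ^ i))) =
      fun i : ℕ => Real.log (1 - x ^ (d+1) * x ^ i) := by
    funext i; ring_nf
  rw [he2] at key
  exact key

lemma qPoch_tail_pos (d : ℕ) : 0 < qPochInf (x ^ (d+1)) x := by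
  have := (tail_hasProd hx0 hx d).tprod_eq
  rw [qPochInf, this]
  exact Real.exp_pos _

lemma qPoch_split (d : ℕ) :
    qPochInf x x = Pfin x d * qPochInf (x ^ (d+1)) x := by
  have hm : Multipliable (fun i : ℕ => 1 - x * x ^ (i + d)) := by
    apply (tail_hasProd hx0 hx d).multipliable.congr
    intro i
    rw [pow_add, pow_succ]; ring
  have key := Multipliable.prod_mul_tprod_nat_mul' (f := fun i : ℕ => 1 - x * x ^ i) (k := d) hm
  have h1 : (∏ i ∈ Finset.range d, (1 - x * x ^ i)) = Pfin x d := by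
    apply Finset.prod_congr rfl
    intro i _
    rw [pow_succ]; ring
  have h2 : (∏' i : ℕ, (1 - x * x ^ (i + d))) = ∏' i : ℕ, (1 - x ^ (d+1) * x ^ i) :=
    tprod_congr fun i => by rw [pow_add, pow_succ]; ring
  rw [h1, h2] at key
  rw [qPochInf, qPochInf]
  exact key.symm

end Final

lemma rpow_exponent_eq {q θ : ℝ} (hq : 2 ≤ q) (hθ : 0 < θ) (d : ℕ) :
    q ^ (-(1 / 2 : ℝ) * ((d : ℝ) - (1 / 2 - Real.log θ / Real.log q)) ^ 2
        + (1 / 2 : ℝ) * (1 / 2 - Real.log θ / Real.log q) ^ 2)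
      = q⁻¹ ^ (d.choose 2) * θ⁻¹ ^ d := by
  have hq0 : (0:ℝ) < q := by linarith
  have hq1 : (1:ℝ) < q := by linarith
  set L := Real.log θ / Real.log q with hL
  have hE : (-(1 / 2 : ℝ) * ((d : ℝ) - (1 / 2 - L)) ^ 2 + (1 / 2 : ℝ) * (1 / 2 - L) ^ 2)
      = (-(d.choose 2 : ℝ)) + (-L) * (d : ℝ) := by
    rw [Nat.cast_choose_two]; ring
  rw [hE, Real.rpow_add hq0]
  congr 1
  · rw [Real.rpow_neg hq0.le, Real.rpow_natCast, inv_pow]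
  · rw [Real.rpow_mul hq0.le, Real.rpow_natCast]
    congr 1
    have hlog : Real.log q ≠ 0 := ne_of_gt (Real.log_pos hq1)
    rw [Real.rpow_neg hq0.le]
    congr 1
    rw [Real.rpow_def_of_pos hq0, hL, mul_div_cancel₀ _ hlog, Real.exp_log hθ]

/-- For real `q ≥ 2` and `θ > 0`, `∑_{d=0}^∞ μ(d) = 1`. -/
theorem grassMu_tsum_eq_one (q θ : ℝ) (hq : 2 ≤ q) (hθ : 0 < θ) :
    ∑' d : ℕ, grassMu q θ d = 1 := by
  have hq0 : (0:ℝ) < q := by linarith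
  set x := q⁻¹ with hxdef
  set z := θ⁻¹ with hzdef
  have hx0 : 0 < x := inv_pos.2 hq0
  have hx : x ≤ 1/2 := by
    rw [hxdef]
    rw [show (1:ℝ)/2 = 2⁻¹ by norm_num]
    exact inv_anti₀ (by norm_num) hq
  have hz : 0 < z := inv_pos.2 hθ
  have hG : qPochInf (-θ⁻¹) q⁻¹ = Gval x z := by
    rw [qPochInf, Gval]
    exact tprod_congr fun i => by rw [← hzdef, ← hxdef]; ring
  have hGpos := Gval_pos hx0 hx hz.le
  have hmu : ∀ d : ℕ, grassMu q θ d = Acoef x d * z ^ d / Gval x z := by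
    intro d
    rw [grassMu, rpow_exponent_eq hq hθ d, hG]
    rw [show q⁻¹ ^ (d+1) = x ^ (d+1) from rfl]
    rw [show qPochInf q⁻¹ q⁻¹ = qPochInf x x from rfl]
    rw [qPoch_split hx0 hx d]
    have htail := (qPoch_tail_pos hx0 hx d).ne'
    have hPf := (Pfin_pos hx0 hx d).ne'
    rw [Acoef, div_mul_eq_mul_div, div_div]
    rw [show Pfin x d * qPochInf (x ^ (d+1)) x * Gval x z
        = (Pfin x d * Gval x z) * qPochInf (x ^ (d+1)) x from by ring]
    exact mul_div_mul_right _ _ htail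
  calc ∑' d : ℕ, grassMu q θ d = ∑' d : ℕ, Acoef x d * z ^ d / Gval x z := by
        exact tsum_congr hmu
    _ = (∑' d : ℕ, Acoef x d * z ^ d) / Gval x z := tsum_div_const
    _ = fEuler x z / Gval x z := rfl
    _ = 1 := by rw [fEuler_eq_Gval hx0 hx hz.le, div_self hGpos.ne']
end
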